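/- Let q be a prime power with q ≡ 1 (mod 2k) and α a generator of F_q*. Define f_{α,k} : F_q × F_q → {0,1,...,k} by f_{α,k}(u,v) = i if v − u ∈ α^{i−1}(F_q*)^k and f_{α,k}(u,v) = 0 if v = u. Then the generalized Paley graph GP(q,k) is an f_{α,k}-equitable graph: for every n ∈ F_q, the partition P_n = {{n}, n + (F_q*)^k, n + α(F_q*)^k, ..., n + α^{k−1}(F_q*)^k} is an equitable partition of GP(q,k), and its quotient matrix does not depend on n. -/

import Mathlib

open scoped Classical
open Fin.NatCast

/-- Let `q ≡ 1 (mod 2k)`, `α` a generator of `Fˣ`, and let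
`f = f_{α,k} : F × F → {0,1,...,k}` be given by `f u v = i` when
`v − u ∈ α^{i−1}(Fˣ)^k` and `f u u = 0`.  Then the generalized Paley graph
`GP(q,k)` is `f`-equitable: for every `n`, the level sets of `f n ·` (namely
`{n}` and the translated cosets `n + α^{i−1}(Fˣ)^k`) form an equitable partition
whose quotient matrix does not depend on `n`. -/
theorem generalizedPaley_f_equitable {F : Type*} [Field F] [Fintype F]
    (k : ℕ) (hk : 0 < k) (hdvd : 2 * k ∣ Fintype.card F - 1)
    (α : Fˣ) (hα : ∀ x : Fˣ, x ∈ Subgroup.zpowers α)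
    (f : F → F → Fin (k + 1))
    (hf0 : ∀ u : F, f u u = 0)
    (hfi : ∀ (u v : F) (i : ℕ), 1 ≤ i → i ≤ k →
      (∃ y : Fˣ, v - u = (α : F) ^ (i - 1) * (y : F) ^ k) → f u v = (i : Fin (k + 1))) :
    (∀ n v : F, f n v = 0 ↔ v = n) ∧
      ∃ Q : Fin (k + 1) → Fin (k + 1) → ℕ, ∀ (n v : F) (i : Fin (k + 1)),
        (((SimpleGraph.fromRel (fun a b : F => ∃ y : Fˣ, (y : F) ^ k = a - b)).neighborFinset
              v).filter (fun u => f n u = i)).card = Q i (f n v) := by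
  classical
  set G : SimpleGraph F :=
    SimpleGraph.fromRel (fun a b : F => ∃ y : Fˣ, (y : F) ^ k = a - b) with hG
  -- every unit is a natural power of α
  have hpow : ∀ w : Fˣ, ∃ e : ℕ, (α : F) ^ e = (w : F) := by
    intro w
    obtain ⟨e, he⟩ := Submonoid.mem_powers_iff _ _ |>.1 (mem_powers_iff_mem_zpowers.2 (hα w))
    exact ⟨e, by rw [← he]; push_cast; ring⟩
  have hdiff : ∀ {n v : F}, v ≠ n → ∃ e : ℕ, v - n = (α : F) ^ e := by
    intro n v h
    obtain ⟨e, he⟩ := hpow (Units.mk0 (v - n) (sub_ne_zero.mpr h))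
    exact ⟨e, by rw [he]; simp⟩
  have hmodlt : ∀ e : ℕ, e % k + 1 < k + 1 := fun e => by
    have := Nat.mod_lt e hk; omega
  -- value of f from a power representation
  have hfval : ∀ (n u : F) (e : ℕ), u - n = (α : F) ^ e →
      f n u = ((e % k + 1 : ℕ) : Fin (k + 1)) := by
    intro n u e he
    refine hfi n u (e % k + 1) (by omega) (by have := Nat.mod_lt e hk; omega)
      ⟨α ^ (e / k), ?_⟩
    have hc : ((α ^ (e / k) : Fˣ) : F) = (α : F) ^ (e / k) := by push_cast; ring
    rw [he, hc, Nat.add_sub_cancel, ← pow_mul, ← pow_add, Nat.mod_add_div']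
  have hvalne : ∀ e : ℕ, ((e % k + 1 : ℕ) : Fin (k + 1)) ≠ 0 := by
    intro e h
    have := congrArg Fin.val h
    rw [Fin.val_cast_of_lt (hmodlt e)] at this
    simp at this
  -- first conjunct
  have hzero : ∀ n v : F, f n v = 0 ↔ v = n := by
    intro n v
    constructor
    · intro h
      by_contra hne
      obtain ⟨e, he⟩ := hdiff hne
      exact hvalne e ((hfval n v e he).symm.trans h)
    · rintro rfl; exact hf0 _
  -- invariance of f under affine maps with kth-power multiplier
  have hinv : ∀ (n u n' u' : F) (s : Fˣ),
      u' - n' = (u - n) * (s : F) ^ k → f n u = f n' u' := by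
    intro n u n' u' s h
    by_cases hun : u = n
    · have h0 : u' = n' := by
        have : u' - n' = 0 := by rw [h, hun]; simp
        exact sub_eq_zero.mp this
      rw [hun, h0, hf0, hf0]
    · obtain ⟨e, he⟩ := hdiff hun
      rw [hfval n u e he]
      refine (hfi n' u' (e % k + 1) (by omega) (by have := Nat.mod_lt e hk; omega)
        ⟨α ^ (e / k) * s, ?_⟩).symm
      have hc : ((α ^ (e / k) * s : Fˣ) : F) = (α : F) ^ (e / k) * (s : F) := by
        push_cast; ring
      rw [h, he, hc, Nat.add_sub_cancel, mul_pow, ← pow_mul, ← mul_assoc, ← pow_add,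
        Nat.mod_add_div']
  -- kth powers are invariant under multiplication by a kth power of a unit
  have hP : ∀ (x : F) (s : Fˣ),
      (∃ y : Fˣ, (y : F) ^ k = x * (s : F) ^ k) ↔ ∃ y : Fˣ, (y : F) ^ k = x := by
    intro x s
    have hs : ((s : F)) ^ k ≠ 0 := pow_ne_zero _ s.ne_zero
    constructor
    · rintro ⟨y, hy⟩
      refine ⟨y * s⁻¹, ?_⟩
      have : ((y * s⁻¹ : Fˣ) : F) = (y : F) * (s : F)⁻¹ := by
        push_cast [Units.val_inv_eq_inv_val]; ring
      rw [this, mul_pow, hy]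
      rw [inv_pow, mul_assoc, mul_inv_cancel₀ hs, mul_one]
    · rintro ⟨y, hy⟩
      exact ⟨y * s, by push_cast [mul_pow]; rw [hy]⟩
  -- adjacency invariance
  have hadj : ∀ (t m : F) (s : Fˣ) (a b : F),
      G.Adj ((a - t) * (s : F) ^ k + m) ((b - t) * (s : F) ^ k + m) ↔ G.Adj a b := by
    intro t m s a b
    have hs : ((s : F)) ^ k ≠ 0 := pow_ne_zero _ s.ne_zero
    rw [hG]
    simp only [SimpleGraph.fromRel_adj]
    constructor
    · rintro ⟨hne, hrel⟩
      refine ⟨fun h => hne (by rw [h]), ?_⟩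
      have h1 : (a - t) * (s:F)^k + m - ((b - t) * (s:F)^k + m) = (a - b) * (s:F)^k := by ring
      have h2 : (b - t) * (s:F)^k + m - ((a - t) * (s:F)^k + m) = (b - a) * (s:F)^k := by ring
      rw [h1, h2, hP, hP] at hrel
      exact hrel
    · rintro ⟨hne, hrel⟩
      refine ⟨fun h => hne ?_, ?_⟩
      · have h' := add_right_cancel h
        exact sub_left_injective (mul_right_cancel₀ hs h')
      · have h1 : (a - t) * (s:F)^k + m - ((b - t) * (s:F)^k + m) = (a - b) * (s:F)^k := by ring
        have h2 : (b - t) * (s:F)^k + m - ((a - t) * (s:F)^k + m) = (b - a) * (s:F)^k := by ring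
        rw [h1, h2, hP, hP]
        exact hrel
  refine ⟨hzero, ?_⟩
  set rep : Fin (k + 1) → F := fun j => if j = 0 then 0 else (α : F) ^ ((j : ℕ) - 1) with hrep
  refine ⟨fun i j => ((G.neighborFinset (rep j)).filter (fun u => f 0 u = i)).card, ?_⟩
  intro n v i
  -- find the multiplier s
  obtain ⟨s, hs⟩ : ∃ s : Fˣ, rep (f n v) = (v - n) * (s : F) ^ k := by
    by_cases hvn : v = n
    · refine ⟨1, ?_⟩
      rw [hvn, hf0]
      simp [hrep]
    · obtain ⟨e, he⟩ := hdiff hvn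
      have hj : f n v = ((e % k + 1 : ℕ) : Fin (k + 1)) := hfval n v e he
      refine ⟨(α ^ (e / k))⁻¹, ?_⟩
      have hjv : ((f n v : Fin (k + 1)) : ℕ) = e % k + 1 := by
        rw [hj, Fin.val_cast_of_lt (hmodlt e)]
      have hjne : f n v ≠ 0 := by rw [hj]; exact hvalne e
      have hu : (α : Fˣ) ^ (e % k) = α ^ e * ((α ^ (e / k))⁻¹) ^ k := by
        rw [inv_pow, ← pow_mul, eq_mul_inv_iff_mul_eq, ← pow_add, Nat.mod_add_div']
      have hu' := congrArg (Units.val) hu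
      push_cast [Units.val_inv_eq_inv_val] at hu'
      simp only [hrep, if_neg hjne, hjv, Nat.add_sub_cancel]
      rw [he]
      convert hu' using 2 <;> push_cast [Units.val_inv_eq_inv_val] <;> ring
  -- the bijection
  have hss : (s : F) ^ k * ((s⁻¹ : Fˣ) : F) ^ k = 1 := by
    rw [← mul_pow]
    rw [Units.val_inv_eq_inv_val, mul_inv_cancel₀ s.ne_zero, one_pow]
  have hss' : ((s⁻¹ : Fˣ) : F) ^ k * (s : F) ^ k = 1 := by rw [mul_comm]; exact hss
  refine Finset.card_nbij' (fun u => (u - n) * (s : F) ^ k)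
    (fun u => u * ((s⁻¹ : Fˣ) : F) ^ k + n) ?_ ?_ ?_ ?_
  · intro a ha
    simp only [Finset.mem_coe, Finset.mem_filter, SimpleGraph.mem_neighborFinset] at ha ⊢
    obtain ⟨hadj1, hfa⟩ := ha
    constructor
    · rw [hs]
      have := (hadj n 0 s v a).mpr hadj1
      simpa using this
    · rw [← hfa]
      exact (hinv n a 0 ((a - n) * (s : F) ^ k) s (by ring)).symm
  · intro b hb
    simp only [Finset.mem_coe, Finset.mem_filter, SimpleGraph.mem_neighborFinset] at hb ⊢
    obtain ⟨hadj1, hfb⟩ := hb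
    constructor
    · have h2 : (rep (f n v) - 0) * ((s⁻¹ : Fˣ) : F) ^ k + n = v := by
        rw [hs, sub_zero, mul_assoc, hss, mul_one, sub_add_cancel]
      have := (hadj 0 n s⁻¹ (rep (f n v)) b).mpr hadj1
      rw [h2, sub_zero] at this
      exact this
    · rw [← hfb]
      exact (hinv 0 b n (b * ((s⁻¹ : Fˣ) : F) ^ k + n) s⁻¹ (by rw [sub_zero]; ring)).symm
  · intro a _
    dsimp only
    rw [mul_assoc, hss, mul_one, sub_add_cancel]
  · intro b _
    dsimp only
    rw [add_sub_cancel_right, mul_assoc, hss', mul_one]
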